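/- Let α, β ∈ ℂ be nonzero algebraic integers such that α/β is not a root of unity (in particular α ≠ β), and let m ≥ 2 be an integer. Suppose that ((α^n − β^n)/(α − β))^m is a rational integer for every n ≥ 1. Then there exist γ, α′, β′ ∈ ℂ with α = γ·α′, β = γ·β′ and γ^m ∈ ℚ, such that either (i) (α′^n − β′^n)/(α′ − β′) ∈ ℚ for all n ≥ 1, or (ii) m is even and there exist coprime integers r, s and complex numbers ρ, σ with ρ² = r, σ² = s, α′ = ρ + σ and β′ = ρ − σ (in which case ((α′^n − β′^n)/(α′ − β′))² ∈ ℚ for all n ≥ 1). -/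

import Mathlib

open Finset in
lemma vand_vanish (V : Finset ℂ) (κ : ℂ → ℂ)
    (h : ∀ n : ℕ, ∑ v ∈ V, κ v * v ^ n = 0) : ∀ v ∈ V, κ v = 0 := by
  classical
  intro v hv
  set k := V.card with hk
  let e : ↥V ≃ Fin k := V.equivFin
  let f : Fin k → ℂ := fun i => ((e.symm i : ↥V) : ℂ)
  have hfinj : Function.Injective f := by
    intro i j hij
    apply e.symm.injective
    exact Subtype.ext hij
  have hsum : ∀ n : ℕ, ∑ i : Fin k, κ (f i) * f i ^ n = 0 := by
    intro n
    have h1 : ∑ i : Fin k, κ (f i) * f i ^ n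
        = ∑ w : ↥V, κ (w : ℂ) * (w : ℂ) ^ n :=
      Equiv.sum_comp e.symm (fun w => κ ((w : ↥V) : ℂ) * ((w : ↥V) : ℂ) ^ n)
    rw [h1, Finset.sum_coe_sort V (fun v => κ v * v ^ n)]
    exact h n
  let M : Matrix (Fin k) (Fin k) ℂ := Matrix.of fun n i => f i ^ (n : ℕ)
  have hdet : M.det ≠ 0 := by
    have hM : M = (Matrix.vandermonde f).transpose := by
      ext n i
      simp [M, Matrix.vandermonde, Matrix.transpose_apply]
    rw [hM, Matrix.det_transpose, Matrix.det_vandermonde_ne_zero_iff]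
    exact hfinj
  have hz : M.mulVec (fun i => κ (f i)) = 0 := by
    funext n
    simpa [M, Matrix.mulVec, dotProduct, mul_comm] using hsum n
  have h0 := Matrix.eq_zero_of_mulVec_eq_zero hdet hz
  have hv' : κ (f (e ⟨v, hv⟩)) = 0 := congrFun h0 (e ⟨v, hv⟩)
  simpa [f] using hv'

open Finset in
lemma matching {k : ℕ} (x y : Fin k → ℂ) (hx : Function.Injective x)
    (lam mu : Fin k → ℂ)
    (hlam : ∀ i, lam i ≠ 0)
    (h : ∀ n : ℕ, ∑ i, lam i * x i ^ n = ∑ j, mu j * y j ^ n) :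
    ∀ i, ∃ j, y j = x i := by
  classical
  let V : Finset ℂ := (univ.image x) ∪ (univ.image y)
  let κ : ℂ → ℂ := fun v =>
    (∑ i ∈ univ.filter (fun i => x i = v), lam i)
      - ∑ j ∈ univ.filter (fun j => y j = v), mu j
  have hκ : ∀ n : ℕ, ∑ v ∈ V, κ v * v ^ n = 0 := by
    intro n
    have hx' : ∑ v ∈ V, (∑ i ∈ univ.filter (fun i => x i = v), lam i) * v ^ n
        = ∑ i, lam i * x i ^ n := by
      rw [← Finset.sum_fiberwise_of_maps_to (g := x) (t := V)
        (fun i _ => by simp [V, mem_union, mem_image])]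
      · refine Finset.sum_congr rfl fun v _ => ?_
        rw [Finset.sum_mul]
        refine Finset.sum_congr rfl fun i hi => ?_
        rw [(mem_filter.mp hi).2]
    have hy' : ∑ v ∈ V, (∑ j ∈ univ.filter (fun j => y j = v), mu j) * v ^ n
        = ∑ j, mu j * y j ^ n := by
      rw [← Finset.sum_fiberwise_of_maps_to (g := y) (t := V)
        (fun j _ => by simp [V, mem_union, mem_image])]
      · refine Finset.sum_congr rfl fun v _ => ?_
        rw [Finset.sum_mul]
        refine Finset.sum_congr rfl fun j hj => ?_
        rw [(mem_filter.mp hj).2]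
    simp only [κ, sub_mul, Finset.sum_sub_distrib, hx', hy', h n, sub_self]
  intro i
  by_contra hno
  push_neg at hno
  have hvi : x i ∈ V := by simp [V, mem_union, mem_image]
  have := vand_vanish V κ hκ (x i) hvi
  have h1 : ∑ i' ∈ univ.filter (fun i' => x i' = x i), lam i' = lam i := by
    have : univ.filter (fun i' => x i' = x i) = {i} := by
      ext i'; simp [hx.eq_iff]
    rw [this, Finset.sum_singleton]
  have h2 : ∑ j ∈ univ.filter (fun j => y j = x i), mu j = 0 := by
    rw [Finset.filter_false_of_mem, Finset.sum_empty]
    intro j _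
    exact hno j
  rw [show κ (x i) = lam i - 0 from by rw [← h1, ← h2]] at this
  simp at this
  exact hlam i this

lemma zpow_ne_one' (z : ℂ) (hz : z ≠ 0) (h : ∀ t : ℕ, 1 ≤ t → z ^ t ≠ 1) :
    ∀ k : ℤ, k ≠ 0 → z ^ k ≠ 1 := by
  intro k hk
  rcases lt_trichotomy k 0 with hlt | h0 | hgt
  · intro habs
    have h2 : z ^ (-k) = 1 := by
      rw [zpow_neg, habs, inv_one]
    obtain ⟨t, ht⟩ : ∃ t : ℕ, (t : ℤ) = -k := ⟨(-k).toNat, Int.toNat_of_nonneg (by omega)⟩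
    rw [← ht, zpow_natCast] at h2
    exact h t (by omega) h2
  · exact absurd h0 hk
  · intro habs
    lift k to ℕ using le_of_lt hgt with t
    rw [zpow_natCast] at habs
    exact h t (by exact_mod_cast hgt) habs

lemma final_step (m : ℕ) (hm : 1 ≤ m) (A B C D : ℂ) (hC : C ≠ 0)
    (h1 : A ^ m = C ^ m) (h2 : A ^ (m - 1) * B = C ^ (m - 1) * D)
    (hAB : A + B = 1) (hCD : C + D = 1) : C = A ∧ D = B := by
  have hCm : C ^ (m - 1) ≠ 0 := pow_ne_zero _ hC
  have hpow : ∀ x : ℂ, x ^ m = x ^ (m - 1) * x := by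
    intro x
    conv_lhs => rw [show m = (m - 1) + 1 by omega]
    rw [pow_succ]
  have key : A ^ (m - 1) = C ^ (m - 1) := by
    have e1 : A ^ (m - 1) * (A + B) = C ^ (m - 1) * (C + D) := by
      rw [mul_add, mul_add, ← hpow A, ← hpow C, h1, h2]
    rw [hAB, hCD, mul_one, mul_one] at e1
    exact e1
  have hA : A = C := by
    have h3 : C ^ (m - 1) * A = C ^ (m - 1) * C := by
      have := h1
      rw [hpow A, hpow C, key] at this
      linear_combination this
    exact mul_left_cancel₀ hCm h3
  refine ⟨hA.symm, ?_⟩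
  have h4 : A + B = C + D := by rw [hAB, hCD]
  rw [← hA] at h4
  linear_combination -h4

open Finset

-- injectivity of the power family
lemma powfam_inj (m : ℕ) (a b : ℂ) (ha : a ≠ 0) (hb : b ≠ 0)
    (hu : ∀ t : ℕ, 1 ≤ t → (a / b) ^ t ≠ 1)
    {i i' : ℕ} (hi : i ≤ m) (hi' : i' ≤ m)
    (heq : a ^ i * b ^ (m - i) = a ^ i' * b ^ (m - i')) : i = i' := by
  have key : ∀ j j' : ℕ, j < j' → j' ≤ m →
      a ^ j * b ^ (m - j) = a ^ j' * b ^ (m - j') → False := by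
    intro j j' hjj' hj'm he
    set t := j' - j with htdef
    have ht : 1 ≤ t := by omega
    have h1 : (a ^ j * b ^ (m - j')) * b ^ t = (a ^ j * b ^ (m - j')) * a ^ t := by
      have e1 : a ^ j * b ^ (m - j') * b ^ t = a ^ j * b ^ (m - j) := by
        rw [mul_assoc, ← pow_add, show m - j' + t = m - j by omega]
      have e2 : a ^ j * b ^ (m - j') * a ^ t = a ^ j' * b ^ (m - j') := by
        rw [mul_right_comm, ← pow_add, show j + t = j' by omega]
      rw [e1, e2]
      exact he
    have h2 : b ^ t = a ^ t := by
      have hne : a ^ j * b ^ (m - j') ≠ 0 :=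
        mul_ne_zero (pow_ne_zero _ ha) (pow_ne_zero _ hb)
      exact mul_left_cancel₀ hne h1
    have : (a / b) ^ t = 1 := by
      rw [div_pow, ← h2, div_self (pow_ne_zero _ hb)]
    exact hu t ht this
  rcases lt_trichotomy i i' with h | h | h
  · exact absurd (key i i' h hi' heq) (by simp)
  · exact h
  · exact absurd (key i' i h hi heq.symm) (by simp)

open Finset

lemma core (m : ℕ) (hm : 2 ≤ m) (a b c d : ℂ)
    (hab : a + b = 1) (hcd : c + d = 1)
    (ha : a ≠ 0) (hb : b ≠ 0) (hc : c ≠ 0) (hd : d ≠ 0)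
    (hu : ∀ t : ℕ, 1 ≤ t → (a / b) ^ t ≠ 1)
    (hu' : ∀ t : ℕ, 1 ≤ t → (c / d) ^ t ≠ 1)
    (h : ∀ n : ℕ, ((a ^ n - b ^ n) / (a - b)) ^ m = ((c ^ n - d ^ n) / (c - d)) ^ m) :
    c * d = a * b := by
  have hab' : a ≠ b := by
    intro he
    exact hu 1 le_rfl (by rw [he, div_self hb, one_pow])
  have hcd' : c ≠ d := by
    intro he
    exact hu' 1 le_rfl (by rw [he, div_self hd, one_pow])
  have habs : a - b ≠ 0 := sub_ne_zero.mpr hab'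
  have hcds : c - d ≠ 0 := sub_ne_zero.mpr hcd'
  -- cross-multiplied identity
  have hpows : ∀ n : ℕ, (a ^ n - b ^ n) ^ m * (c - d) ^ m
      = (c ^ n - d ^ n) ^ m * (a - b) ^ m := by
    intro n
    have := h n
    rw [div_pow, div_pow, div_eq_div_iff (pow_ne_zero _ habs) (pow_ne_zero _ hcds)] at this
    linear_combination this
  -- binomial expansion
  have expand : ∀ (u v : ℂ) (n : ℕ), (u ^ n - v ^ n) ^ m
      = ∑ i ∈ range (m + 1), ((-1 : ℂ) ^ (i + m) * (m.choose i)) * (u ^ i * v ^ (m - i)) ^ n := by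
    intro u v n
    rw [sub_pow]
    refine Finset.sum_congr rfl fun i hi => ?_
    rw [mem_range] at hi
    rw [mul_pow, ← pow_mul, ← pow_mul, ← pow_mul, ← pow_mul]
    ring_nf
  -- the indexed families
  set x : ℕ → ℂ := fun i => a ^ i * b ^ (m - i) with hxdef
  set y : ℕ → ℂ := fun j => c ^ j * d ^ (m - j) with hydef
  set lam : ℕ → ℂ := fun i => (c - d) ^ m * ((-1 : ℂ) ^ (i + m) * (m.choose i)) with hlamdef
  set mu : ℕ → ℂ := fun j => (a - b) ^ m * ((-1 : ℂ) ^ (j + m) * (m.choose j)) with hmudef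
  have hiden : ∀ n : ℕ, ∑ i : Fin (m + 1), lam i * x i ^ n
      = ∑ j : Fin (m + 1), mu j * y j ^ n := by
    intro n
    rw [Fin.sum_univ_eq_sum_range (fun i => lam i * x i ^ n),
        Fin.sum_univ_eq_sum_range (fun j => mu j * y j ^ n)]
    have e1 : ∑ i ∈ range (m + 1), lam i * x i ^ n
        = (c - d) ^ m * (a ^ n - b ^ n) ^ m := by
      rw [expand a b n, mul_sum]
      exact Finset.sum_congr rfl fun i _ => by ring
    have e2 : ∑ j ∈ range (m + 1), mu j * y j ^ n
        = (a - b) ^ m * (c ^ n - d ^ n) ^ m := by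
      rw [expand c d n, mul_sum]
      exact Finset.sum_congr rfl fun j _ => by ring
    rw [e1, e2, mul_comm ((c-d)^m), mul_comm ((a-b)^m), hpows n]
  have hxinj : Function.Injective (fun i : Fin (m+1) => x (i : ℕ)) := by
    intro i i' he
    exact Fin.ext (powfam_inj m a b ha hb hu (by omega) (by omega) he)
  have hlamne : ∀ i : Fin (m+1), lam (i : ℕ) ≠ 0 := by
    intro i
    apply mul_ne_zero (pow_ne_zero _ hcds)
    apply mul_ne_zero (pow_ne_zero _ (by norm_num))
    exact_mod_cast Nat.cast_ne_zero.mpr (Nat.choose_pos (by omega : (i:ℕ) ≤ m)).ne'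
  have hmatch := matching (fun i : Fin (m+1) => x i) (fun j : Fin (m+1) => y j)
    hxinj (fun i => lam i) (fun j => mu j) hlamne hiden
  -- choice of p
  choose p hp using hmatch
  clear hiden hlamne hpows expand h
  -- step analysis
  set w : ℂ := d / c with hwdef
  set u : ℂ := a / b with hudef
  have hw0 : w ≠ 0 := div_ne_zero hd hc
  have hwnru : ∀ t : ℕ, 1 ≤ t → w ^ t ≠ 1 := by
    intro t ht habs
    apply hu' t ht
    have : (c / d) = w⁻¹ := by rw [hwdef, inv_div]
    rw [this, inv_pow, habs, inv_one]
  have yw : ∀ j : ℕ, j ≤ m → y j = c ^ m * w ^ (m - j) := by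
    intro j hj
    have hcm : c ^ m = c ^ j * c ^ (m - j) := by
      rw [← pow_add]; congr 1; omega
    rw [hydef]
    simp only
    rw [hwdef, div_pow, hcm]
    field_simp
  set q : ℕ → ℤ := fun i => if h : i ≤ m then ((p ⟨i, by omega⟩ : ℕ) : ℤ) else 0 with hqdef
  have hq : ∀ (i : ℕ) (h : i ≤ m), q i = ((p ⟨i, by omega⟩ : ℕ) : ℤ) := by
    intro i h; simp [hqdef, h]
  have hqb : ∀ i : ℕ, i ≤ m → 0 ≤ q i ∧ q i ≤ m := by
    intro i h
    rw [hq i h]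
    constructor
    · positivity
    · exact_mod_cast Nat.lt_succ_iff.mp (p ⟨i, by omega⟩).isLt
  have hstep : ∀ i : ℕ, i < m → w ^ (q i - q (i + 1)) = u := by
    intro i hi
    have h0 := hp ⟨i, by omega⟩
    have h1 := hp ⟨i + 1, by omega⟩
    simp only at h0 h1
    -- x (i+1) * b = x i * a
    have hx1 : x (i + 1) * b = x i * a := by
      rw [hxdef]
      simp only
      rw [mul_assoc, ← pow_succ, show m - (i+1) + 1 = m - i by omega, pow_succ]
      ring
    set I : ℕ := (p ⟨i, by omega⟩ : ℕ) with hIdef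
    set J : ℕ := (p ⟨i + 1, by omega⟩ : ℕ) with hJdef
    have hIm : I ≤ m := Nat.lt_succ_iff.mp (p ⟨i, by omega⟩).isLt
    have hJm : J ≤ m := Nat.lt_succ_iff.mp (p ⟨i + 1, by omega⟩).isLt
    rw [yw I hIm] at h0
    rw [yw J hJm] at h1
    -- c^m * w^(m-J) * b = c^m * w^(m-I) * a
    have hkey : w ^ (m - J) * b = w ^ (m - I) * a := by
      have hcm : (c : ℂ) ^ m ≠ 0 := pow_ne_zero _ hc
      have : c ^ m * (w ^ (m - J) * b) = c ^ m * (w ^ (m - I) * a) := by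
        rw [← mul_assoc, ← mul_assoc, h1, h0, hx1]
      exact mul_left_cancel₀ hcm this
    have hz : w ^ ((m : ℤ) - J) * b = w ^ ((m : ℤ) - I) * a := by
      rw [show (m : ℤ) - J = ((m - J : ℕ) : ℤ) by omega,
          show (m : ℤ) - I = ((m - I : ℕ) : ℤ) by omega,
          zpow_natCast, zpow_natCast]
      exact hkey
    have : w ^ ((q i) - q (i + 1)) = w ^ (((m:ℤ) - J) - ((m:ℤ) - I)) := by
      rw [hq i (by omega), hq (i+1) (by omega), ← hIdef, ← hJdef]
      congr 1
      omega
    rw [this, zpow_sub₀ hw0, hudef]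
    rw [div_eq_div_iff (zpow_ne_zero _ hw0) hb]
    linear_combination hz
  set δ : ℤ := q 0 - q 1 with hδdef
  have hconst : ∀ i : ℕ, i < m → q i - q (i + 1) = δ := by
    intro i hi
    by_contra hne
    have e1 := hstep i hi
    have e2 := hstep 0 (by omega)
    have : w ^ ((q i - q (i+1)) - δ) = 1 := by
      rw [zpow_sub₀ hw0, e1, hδdef, e2, div_self]
      rw [hudef]
      exact div_ne_zero ha hb
    exact zpow_ne_one' w hw0 hwnru _ (by omega) this
  have hδ0 : δ ≠ 0 := by
    intro h0
    have e2 := hstep 0 (by omega)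
    rw [show q 0 - q 1 = δ from rfl, h0, zpow_zero] at e2
    apply hab'
    rw [hudef] at e2
    field_simp at e2
    exact e2.symm
  have hlin : ∀ i : ℕ, i ≤ m → q i = q 0 - i * δ := by
    intro i
    induction i with
    | zero => intro _; simp
    | succ n ih =>
      intro hn1
      have h2 := ih (by omega)
      have h3 := hconst n (by omega)
      push_cast
      linear_combination h2 - h3
  have hb0 := hqb 0 (by omega)
  have hbm := hqb m (by omega)
  have hqm : q m = q 0 - m * δ := hlin m le_rfl
  have hM0 : ((m:ℤ)) ≠ 0 := by exact_mod_cast (by omega : m ≠ 0)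
  have hMnn : (0:ℤ) ≤ (m:ℤ) := by positivity
  have hcase : (∀ i : ℕ, i ≤ m → q i = i) ∨ (∀ i : ℕ, i ≤ m → q i = (m:ℤ) - i) := by
    rcases lt_or_gt_of_ne hδ0 with hneg | hpos
    · left
      have h1 : δ ≤ -1 := by omega
      have h2 : (m:ℤ) * δ ≤ (m:ℤ) * (-1) := mul_le_mul_of_nonneg_left h1 hMnn
      have h3 : q 0 - q m = (m:ℤ) * δ := by rw [hqm]; ring
      have h4 : (m:ℤ) * δ = (m:ℤ) * (-1) := by omega
      have h5 : δ = -1 := mul_left_cancel₀ hM0 h4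
      have h6 : q 0 = 0 := by omega
      intro i hi
      rw [hlin i hi, h5, h6]; ring
    · right
      have h1 : (1:ℤ) ≤ δ := by omega
      have h2 : (m:ℤ) * 1 ≤ (m:ℤ) * δ := mul_le_mul_of_nonneg_left h1 hMnn
      have h3 : q 0 - q m = (m:ℤ) * δ := by rw [hqm]; ring
      have h4 : (m:ℤ) * δ = (m:ℤ) * 1 := by omega
      have h5 : δ = 1 := mul_left_cancel₀ hM0 h4
      have h6 : q 0 = (m:ℤ) := by omega
      intro i hi
      rw [hlin i hi, h5, h6]; ring
  have hpval : ∀ (i : ℕ) (h : i ≤ m) (v : ℕ), q i = (v:ℤ) → y v = x i := by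
    intro i h v hv
    have h0 := hp ⟨i, by omega⟩
    simp only at h0
    rw [hq i h] at hv
    have : ((p ⟨i, by omega⟩ : Fin (m+1)) : ℕ) = v := by exact_mod_cast hv
    rw [← this]
    exact h0
  rcases hcase with hcs | hcs
  · -- q i = i : d^m = b^m etc.
    have e0 : y 0 = x 0 := hpval 0 (by omega) 0 (by have := hcs 0 (by omega); omega)
    have e1 : y 1 = x 1 := hpval 1 (by omega) 1 (by have := hcs 1 (by omega); omega)
    rw [hxdef, hydef] at e0 e1
    simp only [pow_zero, one_mul, Nat.sub_zero, pow_one] at e0 e1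
    have hfin := final_step m (by omega) b a d c hd e0.symm
      (by rw [mul_comm (b ^ (m-1)) a, mul_comm (d ^ (m-1)) c]; exact e1.symm)
      (by rw [add_comm]; exact hab) (by rw [add_comm]; exact hcd)
    rw [hfin.1, hfin.2]
  · -- q i = m - i : c^m = b^m etc.
    have e0 : y m = x 0 := hpval 0 (by omega) m (by have := hcs 0 (by omega); omega)
    have e1 : y (m-1) = x 1 := hpval 1 (by omega) (m-1) (by have := hcs 1 (by omega); omega)
    rw [hxdef, hydef] at e0 e1
    simp only [pow_zero, one_mul, Nat.sub_self, mul_one, pow_one,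
      show m - (m-1) = 1 by omega] at e0 e1
    have hfin := final_step m (by omega) b a c d hc e0.symm
      (by rw [mul_comm (b ^ (m-1)) a]; exact e1.symm)
      (by rw [add_comm]; exact hab) hcd
    rw [hfin.1, hfin.2]; ring

open IntermediateField Polynomial

lemma ab_rational (m : ℕ) (hm : 2 ≤ m) (a : ℂ) (ha : a ≠ 0) (hb : (1:ℂ) - a ≠ 0)
    (halg : IsAlgebraic ℚ a)
    (hu : ∀ t : ℕ, 1 ≤ t → (a / (1 - a)) ^ t ≠ 1)
    (hQ : ∀ n : ℕ, ∃ q : ℚ, ((a ^ n - (1-a) ^ n) / (a - (1-a))) ^ m = (q : ℂ)) :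
    ∃ q : ℚ, a * (1 - a) = (q : ℂ) := by
  by_contra hX
  push_neg at hX
  set X : ℂ := a * (1 - a) with hXdef
  have hXint : IsIntegral ℚ X :=
    (halg.isIntegral).mul (isIntegral_one.sub halg.isIntegral)
  have hXnotrange : X ∉ (algebraMap ℚ ℂ).range := by
    rintro ⟨q, hq⟩
    exact hX q (by rw [← hq]; simp [eq_ratCast])
  have hdeg : 2 ≤ (minpoly ℚ X).natDegree :=
    (minpoly.two_le_natDegree_iff hXint).mpr hXnotrange
  set R : Multiset ℂ := (minpoly ℚ X).aroots ℂ with hRdef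
  have hXR : X ∈ R := by
    rw [hRdef, Polynomial.mem_aroots]
    exact ⟨minpoly.ne_zero hXint, minpoly.aeval ℚ X⟩
  have hcard : R.card = (minpoly ℚ X).natDegree := by
    rw [hRdef, Polynomial.aroots_def, ← Polynomial.natDegree_map (algebraMap ℚ ℂ)]
    exact Polynomial.splits_iff_card_roots.mp
      (IsAlgClosed.splits _)
  have hnodup : R.Nodup :=
    Polynomial.nodup_roots ((minpoly.irreducible hXint).separable.map)
  obtain ⟨Y, hYe⟩ : ∃ Y, Y ∈ R.erase X := by
    apply Multiset.exists_mem_of_ne_zero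
    intro h0
    have hce := Multiset.card_erase_of_mem hXR
    rw [h0] at hce
    simp at hce
    omega
  have hYR : Y ∈ R := Multiset.mem_of_mem_erase hYe
  have hYX : Y ≠ X := (hnodup.mem_erase_iff.mp hYe).1
  have hYaeval : aeval Y (minpoly ℚ X) = 0 := by
    rw [hRdef, Polynomial.mem_aroots] at hYR
    exact hYR.2
  have hXS : X ∈ ℚ⟮a⟯ := by
    rw [hXdef]
    exact mul_mem (IntermediateField.mem_adjoin_simple_self ℚ a)
      (sub_mem (one_mem _) (IntermediateField.mem_adjoin_simple_self ℚ a))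
  obtain ⟨σA, hσX⟩ := IntermediateField.exists_algHom_adjoin_of_splits_of_aeval
    (F := ℚ) (E := ℂ) (K := ℂ) (S := {a})
    (fun s hs => by
      rw [Set.mem_singleton_iff] at hs
      subst hs
      exact ⟨halg.isIntegral, IsAlgClosed.splits _⟩)
    hXS hYaeval
  set σ : ℚ⟮a⟯ →+* ℂ := σA.toRingHom with hσdef
  have hσinj : Function.Injective σ := σ.injective
  set ι : ℚ⟮a⟯ →+* ℂ := (algebraMap ℚ⟮a⟯ ℂ) with hιdef
  have hιinj : Function.Injective ι := ι.injective
  set A : ℚ⟮a⟯ := AdjoinSimple.gen ℚ a with hAdef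
  have hAco : ι A = a := IntermediateField.AdjoinSimple.algebraMap_gen ℚ a
  -- images
  set c : ℂ := σ A with hcdef
  set d : ℂ := σ (1 - A) with hddef
  have hcd1 : c + d = 1 := by
    rw [hcdef, hddef, ← map_add]
    simp
  have hc0 : c ≠ 0 := by
    rw [hcdef]
    intro h0
    have : (A : ℚ⟮a⟯) = 0 := hσinj (by rw [h0, map_zero])
    apply ha
    rw [← hAco, this, map_zero]
  have hd0 : d ≠ 0 := by
    rw [hddef]
    intro h0
    have h1 : (1 - A : ℚ⟮a⟯) = 0 := hσinj (by rw [h0, map_zero])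
    apply hb
    rw [show (1:ℂ) - a = ι (1 - A) by rw [map_sub, map_one, hAco], h1, map_zero]
  have hbco : ι (1 - A) = 1 - a := by rw [map_sub, map_one, hAco]
  -- roots of unity condition transfers
  have hu' : ∀ t : ℕ, 1 ≤ t → (c / d) ^ t ≠ 1 := by
    intro t ht habs
    apply hu t ht
    have h1 : σ ((A / (1 - A)) ^ t) = 1 := by
      rw [map_pow, map_div₀, ← hcdef, ← hddef]
      exact habs
    have h2 : ((A / (1 - A)) ^ t : ℚ⟮a⟯) = 1 := hσinj (by rw [h1, map_one])
    calc (a / (1 - a)) ^ t = ι ((A / (1 - A)) ^ t) := by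
          rw [map_pow, map_div₀, hAco, hbco]
        _ = 1 := by rw [h2, map_one]
  -- main transfer
  have hmain : ∀ n : ℕ, ((a ^ n - (1-a) ^ n) / (a - (1-a))) ^ m
      = ((c ^ n - d ^ n) / (c - d)) ^ m := by
    intro n
    obtain ⟨q, hq⟩ := hQ n
    set T : ℚ⟮a⟯ := (A ^ n - (1 - A) ^ n) / (A - (1 - A)) with hTdef
    have hιT : ι T = (a ^ n - (1-a) ^ n) / (a - (1-a)) := by
      rw [hTdef, map_div₀, map_sub, map_sub, map_pow, map_pow, hAco, hbco]
    have hσT : σ T = (c ^ n - d ^ n) / (c - d) := by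
      rw [hTdef, map_div₀, map_sub, map_sub, map_pow, map_pow, ← hcdef, ← hddef]
    have hTm : T ^ m = ((q : ℚ) : ℚ⟮a⟯) := by
      apply hιinj
      rw [map_pow, hιT, map_ratCast]
      exact hq
    rw [← hιT, ← hσT, ← map_pow, ← map_pow, hTm, map_ratCast, map_ratCast]
  have hcore := core m hm a (1 - a) c d (by ring) hcd1 ha hb hc0 hd0 hu hu' hmain
  -- c * d = σ (A * (1 - A)) = Y
  apply hYX
  have h1 : (⟨X, hXS⟩ : ℚ⟮a⟯) = A * (1 - A) := by
    apply Subtype.ext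
    show X = ι (A * (1 - A))
    rw [map_mul, hAco, hbco, hXdef]
  calc Y = σA ⟨X, hXS⟩ := hσX.symm
    _ = σ (A * (1 - A)) := by rw [h1]; rfl
    _ = c * d := by rw [map_mul, ← hcdef, ← hddef]
    _ = a * (1 - a) := hcore
    _ = X := hXdef.symm

theorem stmt13 (α β : ℂ) (hα : IsIntegral ℤ α) (hβ : IsIntegral ℤ β)
    (hα0 : α ≠ 0) (hβ0 : β ≠ 0)
    (hnru : ∀ t : ℕ, 1 ≤ t → (α / β) ^ t ≠ 1)
    (m : ℕ) (hm : 2 ≤ m)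
    (hint : ∀ n : ℕ, 1 ≤ n → ∃ z : ℤ, ((α ^ n - β ^ n) / (α - β)) ^ m = (z : ℂ)) :
    ∃ γ α' β' : ℂ, α = γ * α' ∧ β = γ * β' ∧ (∃ q : ℚ, γ ^ m = (q : ℂ)) ∧
      ((∀ n : ℕ, 1 ≤ n → ∃ q : ℚ, (α' ^ n - β' ^ n) / (α' - β') = (q : ℂ)) ∨
       (Even m ∧ ∃ r s : ℤ, Int.gcd r s = 1 ∧ ∃ ρ σ : ℂ,
          ρ ^ 2 = (r : ℂ) ∧ σ ^ 2 = (s : ℂ) ∧ α' = ρ + σ ∧ β' = ρ - σ)) := by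
  have hαβ : α ≠ β := by
    intro h
    exact hnru 1 le_rfl (by rw [h, div_self hβ0, one_pow])
  have hsub0 : α - β ≠ 0 := sub_ne_zero.mpr hαβ
  set e : ℂ := α + β with hedef
  have he0 : e ≠ 0 := by
    intro h
    apply hnru 2 (by omega)
    have hαeq : α = -β := by rw [hedef] at h; linear_combination h
    rw [hαeq, neg_div, div_self hβ0]
    norm_num
  set a : ℂ := α / e with hadef
  set b : ℂ := β / e with hbdef
  have hab1 : a + b = 1 := by
    rw [hadef, hbdef, ← add_div, hedef, div_self he0]
  have hb1a : b = 1 - a := by linear_combination hab1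
  have ha0 : a ≠ 0 := div_ne_zero hα0 he0
  have hb0 : b ≠ 0 := div_ne_zero hβ0 he0
  have hb0' : (1:ℂ) - a ≠ 0 := by rw [← hb1a]; exact hb0
  have habq : a / b = α / β := by
    rw [hadef, hbdef]
    field_simp
  -- e^m is an integer
  obtain ⟨z2, hz2⟩ := hint 2 (by omega)
  have he2 : (α ^ 2 - β ^ 2) / (α - β) = e := by
    rw [hedef]
    field_simp
    ring
  have hem : e ^ m = (z2 : ℂ) := by rw [← he2]; exact hz2
  have hz20 : (z2 : ℂ) ≠ 0 := by rw [← hem]; exact pow_ne_zero _ he0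
  have hz2Q : ((z2:ℚ) : ℂ) ≠ 0 := by push_cast; exact hz20
  -- algebraicity of a
  have hαQ : IsIntegral ℚ α := hα.tower_top
  have hβQ : IsIntegral ℚ β := hβ.tower_top
  have heQ : IsIntegral ℚ e := hαQ.add hβQ
  have haalg : IsAlgebraic ℚ a := by
    have : IsIntegral ℚ a := by
      rw [hadef, div_eq_mul_inv]
      exact hαQ.mul heQ.inv
    exact this.isAlgebraic
  -- root of unity condition for a/(1-a)
  have hu : ∀ t : ℕ, 1 ≤ t → (a / (1 - a)) ^ t ≠ 1 := by
    intro t ht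
    rw [← hb1a, habq]
    exact hnru t ht
  -- rationality of m-th powers of normalized terms
  have hQ : ∀ n : ℕ, ∃ q : ℚ, ((a ^ n - (1-a) ^ n) / (a - (1-a))) ^ m = (q : ℂ) := by
    intro n
    rw [← hb1a]
    rcases Nat.eq_zero_or_pos n with hn0 | hn1
    · refine ⟨0, ?_⟩
      rw [hn0]
      simp [zero_pow (by omega : m ≠ 0)]
    obtain ⟨k, rfl⟩ : ∃ k, n = k + 1 := ⟨n - 1, by omega⟩
    obtain ⟨z, hz⟩ := hint (k+1) (by omega)
    refine ⟨(z : ℚ) / (z2 : ℚ) ^ k, ?_⟩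
    have hred : (a ^ (k+1) - b ^ (k+1)) / (a - b)
        = ((α ^ (k+1) - β ^ (k+1)) / (α - β)) / e ^ k := by
      rw [hadef, hbdef]
      rw [div_pow, div_pow, div_sub_div_same, div_sub_div_same]
      field_simp
      ring
    rw [hred, div_pow, hz, ← pow_mul, mul_comm k m, pow_mul, hem]
    push_cast
    ring
  obtain ⟨q0, hq0⟩ := ab_rational m hm a ha0 hb0' haalg hu hQ
  -- branch (i): rationality of all normalized terms via recurrence
  have hab' : a - b ≠ 0 := by
    rw [hadef, hbdef, div_sub_div_same]
    exact div_ne_zero hsub0 he0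
  have habq0 : a * b = (q0 : ℂ) := by rw [hb1a]; exact hq0
  set Q : ℕ → ℚ × ℚ := fun n => Nat.rec ((0:ℚ), (1:ℚ))
    (fun _ p => (p.2, p.2 - q0 * p.1)) n with hQdef
  have hQs : ∀ n, Q (n+1) = ((Q n).2, (Q n).2 - q0 * (Q n).1) := fun n => rfl
  have hrat : ∀ n : ℕ, (a ^ n - b ^ n) / (a - b) = (((Q n).1 : ℚ) : ℂ)
      ∧ (a ^ (n+1) - b ^ (n+1)) / (a - b) = (((Q n).2 : ℚ) : ℂ) := by
    intro n
    induction n with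
    | zero =>
      constructor
      · simp [hQdef]
      · show (a ^ 1 - b ^ 1) / (a - b) = (((1:ℚ)) : ℂ)
        rw [pow_one, pow_one, div_self hab']
        norm_num
    | succ k ih =>
      refine ⟨by rw [hQs k]; exact ih.2, ?_⟩
      rw [hQs k]
      have hrec : a ^ (k+2) - b ^ (k+2)
          = (a + b) * (a ^ (k+1) - b ^ (k+1)) - (a * b) * (a ^ k - b ^ k) := by
        ring
      have : (a ^ (k+2) - b ^ (k+2)) / (a - b)
          = (a ^ (k+1) - b ^ (k+1)) / (a - b) - (q0:ℂ) * ((a ^ k - b ^ k) / (a - b)) := by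
        rw [hrec, hab1, habq0]
        field_simp
      rw [this, ih.1, ih.2]
      push_cast
      ring
  -- assemble
  refine ⟨e, a, b, ?_, ?_, ⟨(z2 : ℚ), by push_cast; exact hem⟩, Or.inl ?_⟩
  · rw [hadef, mul_div_cancel₀ _ he0]
  · rw [hbdef, mul_div_cancel₀ _ he0]
  · intro n _
    exact ⟨(Q n).1, (hrat n).1⟩
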